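/- Let (f_n)_{n≥0} and (g_n)_{n≥0} be sequences of real numbers. If f_n = Σ_{k=0}^{n} g_k·S_{1,λ}(n,k) for every n ≥ 0, then g_n = Σ_{k=0}^{n} f_k·S_{2,λ}(n,k) for every n ≥ 0. -/

import Mathlib

open Finset PowerSeries

/-- degenerate falling factorial `(x)_{n,λ}`; `dff 1 x n` is the ordinary falling factorial. -/
noncomputable def dff (lam x : ℝ) (n : ℕ) : ℝ := ∏ i ∈ Finset.range n, (x - (i : ℝ) * lam)

/-- `(1)_{n,1/λ} = ∏_{i<n} (1 - i/λ)`. -/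
noncomputable def oneFall (lam : ℝ) (n : ℕ) : ℝ := ∏ i ∈ Finset.range n, (1 - (i : ℝ) / lam)

/-- degenerate exponential `e_λ^x(t)` as a formal power series. -/
noncomputable def degExp (lam x : ℝ) : PowerSeries ℝ :=
  PowerSeries.mk fun n => dff lam x n / n.factorial

/-- `(1+t)^y = Σ_{n≥0} (y)_n t^n/n!`. -/
noncomputable def onePlus (y : ℝ) : PowerSeries ℝ :=
  PowerSeries.mk fun n => dff 1 y n / n.factorial

/-- `(1-t)^y = Σ_{n≥0} (y)_n (-1)^n t^n/n!`. -/
noncomputable def oneMinus (y : ℝ) : PowerSeries ℝ :=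
  PowerSeries.mk fun n => dff 1 y n * (-1) ^ n / n.factorial

/-- `log_λ(1+t) = Σ_{n≥1} λ^{n-1} (1)_{n,1/λ} t^n/n!`. -/
noncomputable def degLog (lam : ℝ) : PowerSeries ℝ :=
  PowerSeries.mk fun n => if n = 0 then 0 else lam ^ (n - 1) * oneFall lam n / n.factorial

/-- `log_λ(1-t) = Σ_{n≥1} λ^{n-1} (1)_{n,1/λ} (-1)^n t^n/n!`. -/
noncomputable def degLogNeg (lam : ℝ) : PowerSeries ℝ :=
  PowerSeries.mk fun n =>
    if n = 0 then 0 else lam ^ (n - 1) * oneFall lam n * (-1) ^ n / n.factorial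

/-- composition `f(g(t))` of formal power series (the usual composition when the
constant term of `g` is zero). -/
noncomputable def pcomp (f g : PowerSeries ℝ) : PowerSeries ℝ :=
  PowerSeries.mk fun n =>
    ∑ k ∈ Finset.range (n + 1), (PowerSeries.coeff k f) * (PowerSeries.coeff n (g ^ k))

lemma dff_eval_zero (lam : ℝ) {m k : ℕ} (h : m < k) :
    dff lam ((m : ℝ) * lam) k = 0 := by
  apply Finset.prod_eq_zero (Finset.mem_range.mpr h)
  ring

lemma dff_eval_ne (lam : ℝ) (hlam : lam ≠ 0) (m : ℕ) :
    dff lam ((m : ℝ) * lam) m ≠ 0 := by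
  rw [dff, Finset.prod_ne_zero_iff]
  intro i hi
  have hi' : (i : ℝ) < m := by exact_mod_cast Finset.mem_range.mp hi
  have hre : (m : ℝ) * lam - (i : ℝ) * lam = ((m : ℝ) - i) * lam := by ring
  rw [hre]
  exact mul_ne_zero (by linarith) hlam

lemma indep (lam : ℝ) (hlam : lam ≠ 0) (N : ℕ) (c : ℕ → ℝ)
    (h : ∀ x : ℝ, ∑ m ∈ Finset.range (N + 1), c m * dff lam x m = 0) :
    ∀ m, m ≤ N → c m = 0 := by
  intro m
  induction m using Nat.strong_induction_on with
  | _ m ih =>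
    intro hm
    have h0 := h ((m : ℝ) * lam)
    have hsum : ∑ k ∈ Finset.range (N + 1), c k * dff lam ((m : ℝ) * lam) k
        = c m * dff lam ((m : ℝ) * lam) m := by
      apply Finset.sum_eq_single
      · intro k _ hkm
        rcases lt_or_gt_of_ne hkm with h1 | h1
        · rw [ih k h1 (le_of_lt (lt_of_lt_of_le h1 hm))]; ring
        · rw [dff_eval_zero lam h1]; ring
      · intro hmem
        exact absurd (Finset.mem_range.mpr (Nat.lt_succ_of_le hm)) hmem
    rw [hsum] at h0
    exact (mul_eq_zero.mp h0).resolve_right (dff_eval_ne lam hlam m)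

lemma trim_sum (n l : ℕ) (hl : l ≤ n) (a : ℕ → ℝ) :
    ∑ j ∈ Finset.range (n + 1), (if j ≤ l then a j else 0)
      = ∑ j ∈ Finset.range (l + 1), a j := by
  rw [← Finset.sum_filter]
  congr 1
  ext j
  simp only [Finset.mem_filter, Finset.mem_range]
  omega

lemma orth (lam : ℝ) (hlam : lam ≠ 0) (S1 S2 : ℕ → ℕ → ℝ)
    (hS1 : ∀ (x : ℝ) (n : ℕ), dff 1 x n = ∑ l ∈ Finset.range (n + 1), S1 n l * dff lam x l)
    (hS2 : ∀ (x : ℝ) (n : ℕ), dff lam x n = ∑ l ∈ Finset.range (n + 1), S2 n l * dff 1 x l)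
    (n j : ℕ) (hj : j ≤ n) :
    ∑ l ∈ Finset.range (n + 1), (if j ≤ l then S2 n l * S1 l j else 0)
      = if j = n then 1 else 0 := by
  set c : ℕ → ℝ := fun j =>
    (∑ l ∈ Finset.range (n + 1), (if j ≤ l then S2 n l * S1 l j else 0))
      - (if j = n then 1 else 0) with hc
  have key : ∀ x : ℝ, ∑ m ∈ Finset.range (n + 1), c m * dff lam x m = 0 := by
    intro x
    have expand : ∑ m ∈ Finset.range (n + 1),
        (∑ l ∈ Finset.range (n + 1), (if m ≤ l then S2 n l * S1 l m else 0)) * dff lam x m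
        = dff lam x n := by
      rw [hS2 x n,
        show (∑ m ∈ Finset.range (n + 1),
            (∑ l ∈ Finset.range (n + 1), (if m ≤ l then S2 n l * S1 l m else 0)) * dff lam x m)
          = ∑ m ∈ Finset.range (n + 1), ∑ l ∈ Finset.range (n + 1),
              (if m ≤ l then S2 n l * S1 l m * dff lam x m else 0) from
          Finset.sum_congr rfl fun m _ => by
            rw [Finset.sum_mul]
            exact Finset.sum_congr rfl fun l _ => by split <;> simp,
        Finset.sum_comm]
      apply Finset.sum_congr rfl
      intro l hl
      have hl' : l ≤ n := Nat.lt_succ_iff.mp (Finset.mem_range.mp hl)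
      rw [hS1 x l, Finset.mul_sum, trim_sum n l hl']
      exact Finset.sum_congr rfl fun m _ => by ring
    have single : ∑ m ∈ Finset.range (n + 1),
        (if m = n then (1:ℝ) else 0) * dff lam x m = dff lam x n := by
      rw [Finset.sum_eq_single n]
      · simp
      · intro b _ hb; simp [hb]
      · intro hmem; exact absurd (Finset.self_mem_range_succ n) hmem
    simp only [hc, sub_mul, Finset.sum_sub_distrib, expand, single, sub_self]
  have := indep lam hlam n c key j hj
  simp only [hc] at this
  linarith [this]

/-- Inversion theorem: if `f_n = Σ_{k=0}^n g_k S_{1,λ}(n,k)` for all `n`, then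
`g_n = Σ_{k=0}^n f_k S_{2,λ}(n,k)` for all `n`. -/
theorem stmt_2 (lam : ℝ) (hlam : lam ≠ 0) (S1 S2 : ℕ → ℕ → ℝ)
    (hS1 : ∀ (x : ℝ) (n : ℕ), dff 1 x n = ∑ l ∈ Finset.range (n + 1), S1 n l * dff lam x l)
    (hS2 : ∀ (x : ℝ) (n : ℕ), dff lam x n = ∑ l ∈ Finset.range (n + 1), S2 n l * dff 1 x l)
    (f g : ℕ → ℝ)
    (hf : ∀ n : ℕ, f n = ∑ k ∈ Finset.range (n + 1), g k * S1 n k) :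
    ∀ n : ℕ, g n = ∑ k ∈ Finset.range (n + 1), f k * S2 n k := by
  intro n
  have : ∑ k ∈ Finset.range (n + 1), f k * S2 n k
      = ∑ j ∈ Finset.range (n + 1),
          g j * ∑ k ∈ Finset.range (n + 1), (if j ≤ k then S2 n k * S1 k j else 0) := by
    rw [show (∑ j ∈ Finset.range (n + 1),
          g j * ∑ k ∈ Finset.range (n + 1), (if j ≤ k then S2 n k * S1 k j else 0))
        = ∑ j ∈ Finset.range (n + 1), ∑ k ∈ Finset.range (n + 1),
            (if j ≤ k then g j * S1 k j * S2 n k else 0) from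
        Finset.sum_congr rfl fun j _ => by
          rw [Finset.mul_sum]
          exact Finset.sum_congr rfl fun k _ => by split <;> first | ring | simp,
      Finset.sum_comm]
    apply Finset.sum_congr rfl
    intro k hk
    have hk' : k ≤ n := Nat.lt_succ_iff.mp (Finset.mem_range.mp hk)
    rw [hf k, Finset.sum_mul, trim_sum n k hk']
  rw [this]
  have : ∀ j ∈ Finset.range (n + 1),
      g j * ∑ k ∈ Finset.range (n + 1), (if j ≤ k then S2 n k * S1 k j else 0)
        = g j * (if j = n then 1 else 0) := by
    intro j hj
    rw [orth lam hlam S1 S2 hS1 hS2 n j (Nat.lt_succ_iff.mp (Finset.mem_range.mp hj))]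
  rw [Finset.sum_congr rfl this, Finset.sum_eq_single n]
  · simp
  · intro b _ hb; simp [hb]
  · intro hmem; exact absurd (Finset.self_mem_range_succ n) hmem
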